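/- Let h ≥ 1, let X ⊆ B^h be nonempty, let G = Q_h(X), and let u ∈ V(G) have degree h in G. Let X' = {x ∈ \widehat X : u ≤ x}. Then ∨_{x∈X'} x = 1^h; equivalently, |∪_{x∈X'} S^x| = h, where S^x = {i : x_i = 1}. -/

import Mathlib

open SimpleGraph

/-- The hypercube `Q_h` on binary words of length `h`: two words are adjacent
iff their Hamming distance is `1`. -/
def Qcube (h : ℕ) : SimpleGraph (Fin h → Bool) where
  Adj u v := hammingDist u v = 1
  symm := ⟨fun u v huv => (hammingDist_comm v u).trans huv⟩
  loopless := ⟨fun u hu => absurd ((hammingDist_self u).symm.trans hu) (by norm_num)⟩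

/-- Vertex set of the daisy cube `Q_h(X)`: all words below some element of `X`. -/
def daisyVerts {h : ℕ} (X : Set (Fin h → Bool)) : Set (Fin h → Bool) :=
  {v | ∃ x ∈ X, v ≤ x}

/-- The daisy cube `Q_h(X)`, the subgraph of `Q_h` induced by `daisyVerts X`. -/
def daisyGraph {h : ℕ} (X : Set (Fin h → Bool)) : SimpleGraph (daisyVerts X) :=
  SimpleGraph.induce (daisyVerts X) (Qcube h)

/-- `\widehat X`: the set of maximal elements of the poset `(X, ≤)`. -/
def maxSet {h : ℕ} (X : Set (Fin h → Bool)) : Set (Fin h → Bool) :=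
  {x ∈ X | ∀ y ∈ X, x ≤ y → x = y}

/-- The all-zeros word `0^h`. -/
def zeroW (h : ℕ) : Fin h → Bool := fun _ => false

/-- Bitwise XOR of words. -/
def xorW {h : ℕ} (u v : Fin h → Bool) : Fin h → Bool := fun i => xor (u i) (v i)

/-- Bitwise AND of words. -/
def andW {h : ℕ} (u v : Fin h → Bool) : Fin h → Bool := fun i => u i && v i

/-- The weight `w(u)`: the number of ones of a word. -/
def weightW {h : ℕ} (u : Fin h → Bool) : ℕ :=
  (Finset.univ.filter fun i => u i = true).card

/-- The interval `I_G(u,v)`: vertices lying on shortest `u,v`-paths. -/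
def gInterval {V : Type*} (G : SimpleGraph V) (u v : V) : Set V :=
  {w | G.dist u w + G.dist w v = G.dist u v}

/-- `N^u(v)`: neighbors of `v` that are closer to `u` than `v` is. -/
def lowerNbrs {V : Type*} (G : SimpleGraph V) (u v : V) : Set V :=
  {z | G.Adj v z ∧ G.dist u z + 1 = G.dist u v}

/-- `α` is an isometric embedding of `G` into `Q_h`. -/
def IsIsomEmb {V : Type*} (G : SimpleGraph V) {h : ℕ} (α : V → Fin h → Bool) : Prop :=
  ∀ a b, hammingDist (α a) (α b) = G.dist a b

/-- `α` is a proper embedding of `G` into `Q_h`: an isometric embedding such that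
`G` is isomorphic to the daisy cube generated by the image of `α`. -/
def IsProperEmb {V : Type*} (G : SimpleGraph V) {h : ℕ} (α : V → Fin h → Bool) : Prop :=
  IsIsomEmb G α ∧ Nonempty (G ≃g daisyGraph (Set.range α))

/-- `v` is a minimal vertex of `G`: some proper embedding sends `v` to `0^h`. -/
def IsMinVertex {V : Type*} (G : SimpleGraph V) (h : ℕ) (v : V) : Prop :=
  ∃ α : V → Fin h → Bool, IsProperEmb G α ∧ α v = zeroW h

/-- The labeling conditions of Proposition `cubes`/Lemma `partial`: `α v = 0^h`,
the neighbors of `v` get pairwise distinct weight-one labels, and every other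
vertex gets the bitwise OR of the labels of its down-neighbors. -/
def goodLabeling {V : Type*} (G : SimpleGraph V) {h : ℕ} (v : V)
    (α : V → Fin h → Bool) : Prop :=
  α v = zeroW h ∧
  Set.InjOn α (G.neighborSet v) ∧
  (∀ z ∈ G.neighborSet v, weightW (α z) = 1) ∧
  (∀ u ∉ insert v (G.neighborSet v),
    ∀ i, α u i = true ↔ ∃ z ∈ lowerNbrs G v u, α z i = true)


/-- If `u` is a vertex of degree `h` of the daisy cube `G = Q_h(X)`
and `X' = {x ∈ \widehat X : u ≤ x}`, then `∨_{x ∈ X'} x = 1^h`, i.e. every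
coordinate is `1` in some element of `X'`. -/
theorem stmt_11 (h : ℕ) (hh : 1 ≤ h) (X : Set (Fin h → Bool)) (hX : X.Nonempty)
    (u : daisyVerts X) (hu : ((daisyGraph X).neighborSet u).ncard = h) :
    ∀ i : Fin h, ∃ x ∈ maxSet X, (u : Fin h → Bool) ≤ x ∧ x i = true := by
  intro i
  classical
  -- Step 1: find x0 ∈ X with u ≤ x0 and x0 i = true
  have key : ∃ x0 ∈ X, (u : Fin h → Bool) ≤ x0 ∧ x0 i = true := by
    by_cases hui : (u : Fin h → Bool) i = true
    · obtain ⟨x0, hx0, hle⟩ := u.2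
      refine ⟨x0, hx0, hle, ?_⟩
      have := hle i
      rw [hui] at this
      exact le_antisymm (by simp) this
    · -- find a neighbor of u differing at coordinate i
      have hex : ∃ v ∈ (daisyGraph X).neighborSet u,
          (v : Fin h → Bool) i ≠ (u : Fin h → Bool) i := by
        by_contra hcon
        push_neg at hcon
        -- each neighbor differs from u at exactly one coordinate ≠ i
        set N := (daisyGraph X).neighborSet u with hN
        have hdiff : ∀ v ∈ N,
            (Finset.univ.filter fun j => (v : Fin h → Bool) j ≠ (u : Fin h → Bool) j).card = 1 := by
          intro v hv
          have : hammingDist (u : Fin h → Bool) (v : Fin h → Bool) = 1 := (SimpleGraph.mem_neighborSet _ _ _).mp hv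
          rw [hammingDist_comm] at this
          exact this
        have hsingle : ∀ v ∈ N, ∃ j : Fin h,
            (Finset.univ.filter fun k => (v : Fin h → Bool) k ≠ (u : Fin h → Bool) k) = {j} :=
          fun v hv => Finset.card_eq_one.mp (hdiff v hv)
        -- the differing coordinate
        choose f hf using hsingle
        have hfmem : ∀ v (hv : v ∈ N),
            (v : Fin h → Bool) (f v hv) ≠ (u : Fin h → Bool) (f v hv) := by
          intro v hv
          have : f v hv ∈ (Finset.univ.filter fun k =>
              (v : Fin h → Bool) k ≠ (u : Fin h → Bool) k) := by
            rw [hf v hv]; exact Finset.mem_singleton_self _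
          simpa using this
        have honly : ∀ v (hv : v ∈ N) (k : Fin h),
            (v : Fin h → Bool) k ≠ (u : Fin h → Bool) k → k = f v hv := by
          intro v hv k hk
          have : k ∈ (Finset.univ.filter fun k =>
              (v : Fin h → Bool) k ≠ (u : Fin h → Bool) k) := by simpa using hk
          rw [hf v hv] at this
          exact Finset.mem_singleton.mp this
        -- injection from N into ({i}ᶜ : Set (Fin h))
        set g : (daisyVerts X) → Fin h := fun v => if hv : v ∈ N then f v hv else i with hg
        have hmapsto : ∀ v ∈ N, g v ∈ ({i}ᶜ : Set (Fin h)) := by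
          intro v hv
          simp only [hg, dif_pos hv, Set.mem_compl_iff, Set.mem_singleton_iff]
          intro hcontra
          exact hfmem v hv (hcontra ▸ hcon v hv)
        have hinj : Set.InjOn g N := by
          intro v hv w hw hvw
          simp only [hg, dif_pos hv, dif_pos hw] at hvw
          apply Subtype.ext
          funext k
          by_cases hk : k = f v hv
          · subst hk
            have h1 := hfmem v hv
            have h2 := hfmem w hw
            rw [← hvw] at h2
            cases hb : (u : Fin h → Bool) (f v hv)
            · rw [hb] at h1 h2
              simp only [ne_eq, Bool.not_eq_false] at h1 h2
              rw [h1, h2]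
            · rw [hb] at h1 h2
              simp only [ne_eq, Bool.not_eq_true] at h1 h2
              rw [h1, h2]
          · have h1 : (v : Fin h → Bool) k = (u : Fin h → Bool) k := by
              by_contra hc
              exact hk (honly v hv k hc)
            have h2 : (w : Fin h → Bool) k = (u : Fin h → Bool) k := by
              by_contra hc
              exact hk (hvw ▸ honly w hw k hc)
            rw [h1, h2]
        have hfin : ({i}ᶜ : Set (Fin h)).Finite := Set.toFinite _
        have hle : N.ncard ≤ ({i}ᶜ : Set (Fin h)).ncard :=
          Set.ncard_le_ncard_of_injOn g hmapsto hinj hfin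
        have hlt : ({i}ᶜ : Set (Fin h)).ncard < (Set.univ : Set (Fin h)).ncard := by
          apply Set.ncard_lt_ncard _ (Set.toFinite _)
          constructor
          · exact Set.subset_univ _
          · intro hsub
            exact (hsub (Set.mem_univ i)) rfl
        rw [Set.ncard_univ, Nat.card_eq_fintype_card, Fintype.card_fin] at hlt
        rw [hu] at hle
        omega
      obtain ⟨v, hv, hvi⟩ := hex
      obtain ⟨x0, hx0, hvle⟩ := v.2
      refine ⟨x0, hx0, ?_, ?_⟩
      · -- u ≤ x0 : u and v differ only at i (and possibly elsewhere?) no: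
        -- v differs from u at exactly one coordinate, which must be i here
        have hdist : hammingDist (u : Fin h → Bool) (v : Fin h → Bool) = 1 := (SimpleGraph.mem_neighborSet _ _ _).mp hv
        have hcard : (Finset.univ.filter fun j =>
            (u : Fin h → Bool) j ≠ (v : Fin h → Bool) j).card = 1 := hdist
        obtain ⟨j, hj⟩ := Finset.card_eq_one.mp hcard
        have hij : i = j := by
          have : i ∈ (Finset.univ.filter fun j =>
              (u : Fin h → Bool) j ≠ (v : Fin h → Bool) j) := by
            simpa using (fun hc => hvi hc.symm)
          rw [hj] at this
          exact Finset.mem_singleton.mp this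
        intro k
        by_cases hk : k = i
        · subst hk
          have hukf : (u : Fin h → Bool) k = false := Bool.eq_false_iff.mpr hui
          rw [hukf]; exact Bool.false_le _
        · have : (u : Fin h → Bool) k = (v : Fin h → Bool) k := by
            by_contra hc
            have : k ∈ (Finset.univ.filter fun j =>
                (u : Fin h → Bool) j ≠ (v : Fin h → Bool) j) := by simpa using hc
            rw [hj] at this
            exact hk ((Finset.mem_singleton.mp this).trans hij.symm)
          rw [this]
          exact hvle k
      · -- x0 i = true since v i = true
        have hvit : (v : Fin h → Bool) i = true := by
          cases hb : (v : Fin h → Bool) i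
          · exfalso
            apply hvi
            rw [hb]
            cases hb2 : (u : Fin h → Bool) i
            · rfl
            · exact absurd hb2 hui
          · rfl
        have := hvle i
        rw [hvit] at this
        exact le_antisymm (by simp) this
  obtain ⟨x0, hx0X, hux0, hx0i⟩ := key
  -- Step 2: a maximal element above x0
  have hmaxex : ∃ y ∈ X, x0 ≤ y ∧ ∀ z ∈ X, y ≤ z → y = z := by
    have hfin : ({z ∈ X | x0 ≤ z}).Finite := Set.toFinite _
    have hne : ({z ∈ X | x0 ≤ z}).Nonempty := ⟨x0, hx0X, le_refl _⟩
    obtain ⟨y, hy, hmax⟩ := Set.Finite.exists_maximalFor id _ hfin hne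
    refine ⟨y, hy.1, hy.2, ?_⟩
    intro z hz hyz
    exact le_antisymm hyz (hmax ⟨hz, le_trans hy.2 hyz⟩ hyz)
  obtain ⟨y, hyX, hxy, hmax⟩ := hmaxex
  refine ⟨y, ⟨hyX, hmax⟩, le_trans hux0 hxy, ?_⟩
  have := hxy i
  rw [hx0i] at this
  exact le_antisymm (by simp) this
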